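/- The number of Boolean multiple-output functions from 𝔹^{n-1} to 𝔹^n equals (2^(2^(n-1)))^n, which equals the number of half V-shaped reversible circuits on n lines (n single-target gates with increasing targets). Hence there is a bijection between functions in B_{n-1,n} and such circuits. -/

import Mathlib

/-- A single-target gate with target `i` and control function `c`. -/
def stg {n : ℕ} (i : Fin n) (c : (Fin n → Bool) → Bool) (x : Fin n → Bool) : Fin n → Bool :=
  Function.update x i (xor (x i) (c x))

/-- `c` does not depend on coordinate `i`. -/
def IndepOf {n : ℕ} (i : Fin n) (c : (Fin n → Bool) → Bool) : Prop :=
  ∀ x y : Fin n → Bool, (∀ j, j ≠ i → x j = y j) → c x = c y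

/-- Half V-shaped circuit on `n` lines with control functions `c`. -/
def circuit {n : ℕ} (c : Fin n → ((Fin n → Bool) → Bool)) (x : Fin n → Bool) : Fin n → Bool :=
  (List.finRange n).foldl (fun y j => stg j (c j) y) x

lemma stg_apply_ne {n : ℕ} {i j : Fin n} (c : (Fin n → Bool) → Bool) (x : Fin n → Bool)
    (h : j ≠ i) : stg i c x j = x j := by
  simp [stg, Function.update_of_ne h]

lemma stg_involutive {n : ℕ} {i : Fin n} {c : (Fin n → Bool) → Bool} (h : IndepOf i c)
    (x : Fin n → Bool) : stg i c (stg i c x) = x := by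
  have hc : c (stg i c x) = c x := h _ _ (fun j hj => stg_apply_ne c x hj)
  funext j
  by_cases hj : j = i
  · rw [hj]
    simp only [stg, Function.update_self]
    rw [show c (Function.update x i (xor (x i) (c x))) = c x from hc]
    cases hxi : x i <;> cases hcx : c x <;> rfl
  · simp [stg, Function.update_of_ne hj]

lemma foldl_ne {n : ℕ} (c : Fin n → ((Fin n → Bool) → Bool)) (l : List (Fin n))
    (x : Fin n → Bool) {i : Fin n} (h : ∀ j ∈ l, j ≠ i) :
    (l.foldl (fun y j => stg j (c j) y) x) i = x i := by
  induction l generalizing x with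
  | nil => rfl
  | cons a l ih =>
      simp only [List.foldl_cons]
      rw [ih _ (fun j hj => h j (List.mem_cons_of_mem _ hj))]
      exact stg_apply_ne _ _ (Ne.symm (h a List.mem_cons_self))

lemma foldl_congr {n : ℕ} (c c' : Fin n → ((Fin n → Bool) → Bool)) (l : List (Fin n))
    (x : Fin n → Bool) (h : ∀ j ∈ l, c j = c' j) :
    l.foldl (fun y j => stg j (c j) y) x = l.foldl (fun y j => stg j (c' j) y) x := by
  induction l generalizing x with
  | nil => rfl
  | cons a l ih =>
      simp only [List.foldl_cons]
      rw [h a List.mem_cons_self]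
      exact ih _ (fun j hj => h j (List.mem_cons_of_mem _ hj))

lemma foldl_surj {n : ℕ} (c : Fin n → ((Fin n → Bool) → Bool))
    (hc : ∀ j, IndepOf j (c j)) (l : List (Fin n)) (x : Fin n → Bool) :
    ∃ w, l.foldl (fun y j => stg j (c j) y) w = x := by
  induction l generalizing x with
  | nil => exact ⟨x, rfl⟩
  | cons a l ih =>
      obtain ⟨w', hw'⟩ := ih x
      exact ⟨stg a (c a) w', by simp [List.foldl_cons, stg_involutive (hc a), hw']⟩

lemma circuit_inj {n : ℕ} (c c' : Fin n → ((Fin n → Bool) → Bool))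
    (hc : ∀ j, IndepOf j (c j)) (hc' : ∀ j, IndepOf j (c' j))
    (h : circuit c = circuit c') : c = c' := by
  suffices H : ∀ k : ℕ, ∀ j : Fin n, j.val = k → c j = c' j by
    funext j; exact H j.val j rfl
  intro k
  induction k using Nat.strong_induction_on with
  | _ k IH =>
    intro j hj
    subst hj
    have hmem : j ∈ List.finRange n := List.mem_finRange j
    obtain ⟨A, B, hAB⟩ := List.append_of_mem hmem
    have hpw : List.Pairwise (· < ·) (List.finRange n) := List.pairwise_lt_finRange n
    rw [hAB, List.pairwise_append] at hpw
    have hA : ∀ i ∈ A, i < j := fun i hi => hpw.2.2 i hi j List.mem_cons_self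
    have hB : ∀ i ∈ B, j < i := fun i hi => (List.pairwise_cons.mp hpw.2.1).1 i hi
    funext x
    obtain ⟨w, hw⟩ := foldl_surj c hc A x
    have hw' : A.foldl (fun y i => stg i (c' i) y) w = x := by
      rw [← foldl_congr c c' A w (fun i hi => IH i.val (hA i hi) i rfl)]
      exact hw
    have e1 : circuit c w j = xor (x j) (c j x) := by
      unfold circuit
      rw [hAB, List.foldl_append, hw, List.foldl_cons,
        foldl_ne c B _ (fun i hi => ne_of_gt (hB i hi))]
      simp [stg]
    have e2 : circuit c' w j = xor (x j) (c' j x) := by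
      unfold circuit
      rw [hAB, List.foldl_append, hw', List.foldl_cons,
        foldl_ne c' B _ (fun i hi => ne_of_gt (hB i hi))]
      simp [stg]
    have := e1.symm.trans ((congrFun (congrFun h w) j).trans e2)
    cases hx : x j <;> cases hcx : c j x <;> cases hcx' : c' j x <;>
      simp_all

def ctrlEquiv (m : ℕ) (j : Fin (m+1)) :
    ((Fin m → Bool) → Bool) ≃ {d : (Fin (m+1) → Bool) → Bool // IndepOf j d} where
  toFun d := ⟨fun x => d (fun k => x (j.succAbove k)), fun x y hxy => by
    show d (fun k => x (j.succAbove k)) = d (fun k => y (j.succAbove k))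
    exact congrArg d (funext fun k => hxy _ (Fin.succAbove_ne j k))⟩
  invFun c y := c.1 (j.insertNth false y)
  left_inv d := by
    funext y
    simp [Fin.insertNth_apply_succAbove]
  right_inv c := by
    ext x
    refine c.2 _ _ (fun k hk => ?_)
    obtain ⟨k', rfl⟩ := Fin.exists_succAbove_eq hk
    simp [Fin.insertNth_apply_succAbove]

theorem stmt_15 (n : ℕ) (hn : 1 ≤ n) :
    Fintype.card ((Fin (n - 1) → Bool) → (Fin n → Bool)) = (2 ^ 2 ^ (n - 1)) ^ n ∧
    Set.ncard {f : (Fin n → Bool) → (Fin n → Bool) |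
        ∃ c : Fin n → ((Fin n → Bool) → Bool),
          (∀ j, IndepOf j (c j)) ∧ f = circuit c} = (2 ^ 2 ^ (n - 1)) ^ n ∧
    Nonempty (((Fin (n - 1) → Bool) → (Fin n → Bool)) ≃
      {f : (Fin n → Bool) → (Fin n → Bool) |
        ∃ c : Fin n → ((Fin n → Bool) → Bool),
          (∀ j, IndepOf j (c j)) ∧ f = circuit c}) := by
  obtain ⟨m, rfl⟩ : ∃ m, n = m + 1 := ⟨n - 1, (Nat.succ_pred_eq_of_pos hn).symm⟩
  set S : Set ((Fin (m+1) → Bool) → (Fin (m+1) → Bool)) :=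
    {f | ∃ c : Fin (m+1) → ((Fin (m+1) → Bool) → Bool),
      (∀ j, IndepOf j (c j)) ∧ f = circuit c} with hS
  have e0 : ((Fin (m+1-1) → Bool) → (Fin (m+1) → Bool)) ≃
      ((Fin m → Bool) → (Fin (m+1) → Bool)) := Equiv.refl _
  have e1 : ((Fin m → Bool) → (Fin (m+1) → Bool)) ≃
      (∀ _ : Fin (m+1), ((Fin m → Bool) → Bool)) :=
    Equiv.piComm (fun (_ : Fin m → Bool) (_ : Fin (m+1)) => Bool)
  have e2 : (∀ _ : Fin (m+1), ((Fin m → Bool) → Bool)) ≃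
      (∀ j : Fin (m+1), {d : (Fin (m+1) → Bool) → Bool // IndepOf j d}) :=
    Equiv.piCongrRight (fun j => ctrlEquiv m j)
  have e3 : (∀ j : Fin (m+1), {d : (Fin (m+1) → Bool) → Bool // IndepOf j d}) ≃
      {c : Fin (m+1) → ((Fin (m+1) → Bool) → Bool) // ∀ j, IndepOf j (c j)} :=
    Equiv.subtypePiEquivPi.symm
  have e4 : {c : Fin (m+1) → ((Fin (m+1) → Bool) → Bool) // ∀ j, IndepOf j (c j)} ≃ S :=
    Equiv.ofBijective (fun c => ⟨circuit c.1, ⟨c.1, c.2, rfl⟩⟩)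
      ⟨fun c1 c2 h12 =>
        Subtype.ext (circuit_inj _ _ c1.2 c2.2 (congrArg Subtype.val h12)),
       fun f => by
        obtain ⟨c, hPc, hfc⟩ := f.2
        exact ⟨⟨c, hPc⟩, Subtype.ext hfc.symm⟩⟩
  have E := e0.trans (e1.trans (e2.trans (e3.trans e4)))
  have card1 : Fintype.card ((Fin (m+1-1) → Bool) → (Fin (m+1) → Bool)) =
      (2 ^ 2 ^ (m+1-1)) ^ (m+1) := by
    simp only [Nat.add_sub_cancel, Fintype.card_fun, Fintype.card_bool, Fintype.card_fin]
    rw [← pow_mul, ← pow_mul, mul_comm]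
  refine ⟨card1, ?_, ⟨E⟩⟩
  have : S.ncard = Nat.card ((Fin (m+1-1) → Bool) → (Fin (m+1) → Bool)) := by
    rw [← Nat.card_coe_set_eq]
    exact Nat.card_congr E.symm
  rw [hS] at this
  rw [this, Nat.card_eq_fintype_card, card1]
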